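/- arXiv:2407.09465 — 5 statements merged into one kernel-verified Lean document; each statement's English description precedes it below -/
import Mathlib

section
/- Let (Ω, ℬ, P) be a probability space, let 𝒢 and ℋ be independent sub-σ-algebras of ℬ, and let X : Ω → ℝⁿ be square-integrable with E[X] = 0. Then E[‖X‖²] − E[‖E[X|𝒢]‖²] ≥ E[‖E[X|ℋ]‖²], where E[X|𝒢] and E[X|ℋ] denote conditional expectations and ‖·‖ is the Euclidean norm on ℝⁿ. -/
open MeasureTheory ProbabilityTheory

section Aux

variable {α E : Type*} [NormedAddCommGroup E] [InnerProductSpace ℝ E] [CompleteSpace E]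
  {m m0 : MeasurableSpace α} {μ : Measure α} [IsFiniteMeasure μ]

lemma condexpL2_ae_eq_condexp' (hm : m ≤ m0) (f : Lp E 2 μ) :
    (condExpL2 E ℝ hm f : α → E) =ᵐ[μ] μ[f|m] := by
  haveI : SigmaFinite (μ.trim hm) := sigmaFiniteTrim_mono _ le_rfl
  refine ae_eq_condExp_of_forall_setIntegral_eq hm
    ((Lp.memLp f).integrable one_le_two) (fun s hs hμs => ?_) (fun s hs hμs => ?_) ?_
  · exact integrableOn_condExpL2_of_measure_ne_top hm hμs.ne f
  · exact integral_condExpL2_eq hm f hs hμs.ne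
  · exact aestronglyMeasurable_condExpL2 hm f

omit [CompleteSpace E] [IsFiniteMeasure μ] in
lemma integral_norm_sq_eq_norm_sq (f : Lp E 2 μ) :
    ∫ a, ‖f a‖ ^ 2 ∂μ = ‖f‖ ^ 2 := by
  rw [← real_inner_self_eq_norm_sq, L2.inner_def]
  exact integral_congr_ae
    (Filter.Eventually.of_forall fun a => (real_inner_self_eq_norm_sq _).symm)

end Aux

set_option synthInstance.maxHeartbeats 400000 in
/-- If `𝒢` and `ℋ` are independent sub-σ-algebras and `X` is a centered
square-integrable random vector, then
`E[‖X‖²] − E[‖E[X|𝒢]‖²] ≥ E[‖E[X|ℋ]‖²]`. -/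
theorem sq_norm_condexp_indep_le {Ω : Type*} {mΩ : MeasurableSpace Ω}
    (P : Measure Ω) [IsProbabilityMeasure P]
    {n : ℕ} (𝒢 ℋ : MeasurableSpace Ω) (h𝒢 : 𝒢 ≤ mΩ) (hℋ : ℋ ≤ mΩ)
    (hIndep : Indep 𝒢 ℋ P)
    (X : Ω → EuclideanSpace ℝ (Fin n)) (hX : MemLp X 2 P)
    (hcent : ∫ ω, X ω ∂P = 0) :
    (∫ ω, ‖X ω‖ ^ 2 ∂P) - ∫ ω, ‖(P[X | 𝒢]) ω‖ ^ 2 ∂P ≥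
      ∫ ω, ‖(P[X | ℋ]) ω‖ ^ 2 ∂P := by
  haveI hsf𝒢 : SigmaFinite (P.trim h𝒢) := sigmaFiniteTrim_mono _ le_rfl
  haveI hsfℋ : SigmaFinite (P.trim hℋ) := sigmaFiniteTrim_mono _ le_rfl
  set f : Lp (EuclideanSpace ℝ (Fin n)) 2 P := hX.toLp X with hfdef
  have hfX : ⇑f =ᵐ[P] X := hX.coeFn_toLp
  set g := condExpL2 (EuclideanSpace ℝ (Fin n)) ℝ h𝒢 f with hgdef
  set h := condExpL2 (EuclideanSpace ℝ (Fin n)) ℝ hℋ f with hhdef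
  -- almost everywhere identifications with conditional expectations
  have hgc : ⇑(g : Lp (EuclideanSpace ℝ (Fin n)) 2 P) =ᵐ[P] P[X|𝒢] :=
    (condexpL2_ae_eq_condexp' h𝒢 f).trans (condExp_congr_ae hfX)
  have hhc : ⇑(h : Lp (EuclideanSpace ℝ (Fin n)) 2 P) =ᵐ[P] P[X|ℋ] :=
    (condexpL2_ae_eq_condexp' hℋ f).trans (condExp_congr_ae hfX)
  -- rewrite the three integrals as squared L² norms
  have h1 : ∫ ω, ‖X ω‖ ^ 2 ∂P = ‖f‖ ^ 2 := by
    rw [← integral_norm_sq_eq_norm_sq f]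
    exact (integral_congr_ae (hfX.mono fun ω hω => by rw [hω])).symm
  have h2 : ∫ ω, ‖(P[X|𝒢]) ω‖ ^ 2 ∂P
      = ‖(g : Lp (EuclideanSpace ℝ (Fin n)) 2 P)‖ ^ 2 := by
    rw [← integral_norm_sq_eq_norm_sq (g : Lp (EuclideanSpace ℝ (Fin n)) 2 P)]
    exact (integral_congr_ae (hgc.mono fun ω hω => by rw [hω])).symm
  have h3 : ∫ ω, ‖(P[X|ℋ]) ω‖ ^ 2 ∂P
      = ‖(h : Lp (EuclideanSpace ℝ (Fin n)) 2 P)‖ ^ 2 := by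
    rw [← integral_norm_sq_eq_norm_sq (h : Lp (EuclideanSpace ℝ (Fin n)) 2 P)]
    exact (integral_congr_ae (hhc.mono fun ω hω => by rw [hω])).symm
  rw [ge_iff_le, h1, h2, h3]
  -- Pythagoras: ‖f‖² = ‖g‖² + ‖f - g‖²
  have horth : inner ℝ (f - (g : Lp (EuclideanSpace ℝ (Fin n)) 2 P))
      ((g : Lp (EuclideanSpace ℝ (Fin n)) 2 P)) = (0 : ℝ) := by
    rw [inner_sub_left, hgdef,
      inner_condExpL2_eq_inner_fun h𝒢 f _ (lpMeas.aestronglyMeasurable _), sub_self]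
  have hpyth : ‖f‖ ^ 2 = ‖(g : Lp (EuclideanSpace ℝ (Fin n)) 2 P)‖ ^ 2
      + ‖f - (g : Lp (EuclideanSpace ℝ (Fin n)) 2 P)‖ ^ 2 := by
    have hsplit : (g : Lp (EuclideanSpace ℝ (Fin n)) 2 P)
        + (f - (g : Lp (EuclideanSpace ℝ (Fin n)) 2 P)) = f := by abel
    calc ‖f‖ ^ 2 = ‖(g : Lp (EuclideanSpace ℝ (Fin n)) 2 P)
          + (f - (g : Lp (EuclideanSpace ℝ (Fin n)) 2 P))‖ ^ 2 := by rw [hsplit]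
      _ = ‖(g : Lp (EuclideanSpace ℝ (Fin n)) 2 P)‖ ^ 2
            + 2 * inner ℝ ((g : Lp (EuclideanSpace ℝ (Fin n)) 2 P))
              (f - (g : Lp (EuclideanSpace ℝ (Fin n)) 2 P))
            + ‖f - (g : Lp (EuclideanSpace ℝ (Fin n)) 2 P)‖ ^ 2 := norm_add_sq_real _ _
      _ = ‖(g : Lp (EuclideanSpace ℝ (Fin n)) 2 P)‖ ^ 2
            + ‖f - (g : Lp (EuclideanSpace ℝ (Fin n)) 2 P)‖ ^ 2 := by
            rw [real_inner_comm, horth]; ring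
  -- the projection of g onto ℋ vanishes, by independence
  have hproj0 : condExpL2 (EuclideanSpace ℝ (Fin n)) ℝ hℋ
      ((g : Lp (EuclideanSpace ℝ (Fin n)) 2 P)) = 0 := by
    have e1 : ⇑(condExpL2 (EuclideanSpace ℝ (Fin n)) ℝ hℋ
        ((g : Lp (EuclideanSpace ℝ (Fin n)) 2 P)) : Lp (EuclideanSpace ℝ (Fin n)) 2 P)
        =ᵐ[P] P[⇑(g : Lp (EuclideanSpace ℝ (Fin n)) 2 P)|ℋ] := condexpL2_ae_eq_condexp' hℋ _
    have e2 : P[⇑(g : Lp (EuclideanSpace ℝ (Fin n)) 2 P)|ℋ] =ᵐ[P] P[P[X|𝒢]|ℋ] :=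
      condExp_congr_ae hgc
    have e3 : P[P[X|𝒢]|ℋ] =ᵐ[P] fun _ => ∫ ω, (P[X|𝒢]) ω ∂P :=
      condExp_indep_eq h𝒢 hℋ stronglyMeasurable_condExp hIndep
    have e4 : ∫ ω, (P[X|𝒢]) ω ∂P = 0 := by rw [integral_condExp h𝒢, hcent]
    have e5 : ⇑(condExpL2 (EuclideanSpace ℝ (Fin n)) ℝ hℋ
        ((g : Lp (EuclideanSpace ℝ (Fin n)) 2 P)) : Lp (EuclideanSpace ℝ (Fin n)) 2 P)
        =ᵐ[P] 0 := by
      filter_upwards [e1, e2, e3] with ω w1 w2 w3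
      simp only [w1, w2, w3, e4, Pi.zero_apply]
    have h0 : ((condExpL2 (EuclideanSpace ℝ (Fin n)) ℝ hℋ
        ((g : Lp (EuclideanSpace ℝ (Fin n)) 2 P))) : Lp (EuclideanSpace ℝ (Fin n)) 2 P) = 0 :=
      Lp.eq_zero_iff_ae_eq_zero.mpr e5
    exact Subtype.ext (by simpa using h0)
  -- contraction: ‖h‖ ≤ ‖f - g‖
  have hkey : h = condExpL2 (EuclideanSpace ℝ (Fin n)) ℝ hℋ
      (f - (g : Lp (EuclideanSpace ℝ (Fin n)) 2 P)) := by
    rw [map_sub, hproj0, sub_zero, hhdef]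
  have hcontr : ‖(h : Lp (EuclideanSpace ℝ (Fin n)) 2 P)‖
      ≤ ‖f - (g : Lp (EuclideanSpace ℝ (Fin n)) 2 P)‖ := by
    rw [hkey]
    exact norm_condExpL2_coe_le hℋ _
  have hsq : ‖(h : Lp (EuclideanSpace ℝ (Fin n)) 2 P)‖ ^ 2
      ≤ ‖f - (g : Lp (EuclideanSpace ℝ (Fin n)) 2 P)‖ ^ 2 :=
    pow_le_pow_left₀ (norm_nonneg _) hcontr 2
  linarith
end

section
/- Let (Ω, ℬ, P) be a probability space, let 𝒢 and ℋ be independent sub-σ-algebras of ℬ, and let X : Ω → ℝⁿ be square-integrable with E[X] = 0. Then equality holds in the inequality E[‖X‖²] − E[‖E[X|𝒢]‖²] ≥ E[‖E[X|ℋ]‖²] if and only if X − E[X|𝒢] = E[X|ℋ] almost surely; in particular, equality implies that X − E[X|𝒢] is almost surely equal to an ℋ-measurable random vector. -/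
open MeasureTheory ProbabilityTheory

section Aux

variable {α E : Type*} [NormedAddCommGroup E] [InnerProductSpace ℝ E] [CompleteSpace E]
  {m m0 : MeasurableSpace α} {μ : Measure α}

lemma norm_sq_Lp_eq_integral [IsFiniteMeasure μ] {G : Lp E 2 μ} {g : α → E}
    (h : G =ᵐ[μ] g) : ‖G‖ ^ 2 = ∫ a, ‖g a‖ ^ 2 ∂μ := by
  rw [← real_inner_self_eq_norm_sq, L2.inner_def]
  refine integral_congr_ae ?_
  filter_upwards [h] with a ha
  rw [ha, real_inner_self_eq_norm_sq]

lemma condexp_ae_eq_condexpL2' (hm : m ≤ m0)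
    [IsFiniteMeasure μ] {f : α → E} (hf : MemLp f 2 μ) :
    μ[f|m] =ᵐ[μ] (condExpL2 E ℝ hm (hf.toLp f) : α →₂[μ] E) := by
  refine (ae_eq_condExp_of_forall_setIntegral_eq hm (hf.integrable one_le_two)
    (fun s _ _ => integrableOn_condExpL2_of_measure_ne_top hm (measure_ne_top μ s) _)
    (fun s hs _ => ?_) (lpMeas.aestronglyMeasurable _)).symm
  rw [integral_condExpL2_eq hm (hf.toLp f) hs (measure_ne_top μ s)]
  exact setIntegral_congr_ae (hm s hs) ((MemLp.coeFn_toLp hf).mono fun x hx _ => hx)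

lemma integral_norm_sq_condexp_pythagoras (hm : m ≤ m0)
    [IsFiniteMeasure μ] {f : α → E} (hf : MemLp f 2 μ) :
    ∫ a, ‖f a‖ ^ 2 ∂μ =
      (∫ a, ‖f a - (μ[f|m]) a‖ ^ 2 ∂μ) + ∫ a, ‖(μ[f|m]) a‖ ^ 2 ∂μ := by
  haveI : Fact (m ≤ m0) := ⟨hm⟩
  set F : Lp E 2 μ := hf.toLp f with hF
  set Q : lpMeas E ℝ m 2 μ := condExpL2 E ℝ hm F with hQ
  have hc : μ[f|m] =ᵐ[μ] (Q : Lp E 2 μ) := condexp_ae_eq_condexpL2' hm hf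
  have horth : @inner ℝ _ _ (F - (Q : Lp E 2 μ)) (Q : Lp E 2 μ) = 0 :=
    Submodule.starProjection_inner_eq_zero F _ Q.2
  have hdec : ‖F‖ ^ 2 = ‖F - (Q : Lp E 2 μ)‖ ^ 2 + ‖(Q : Lp E 2 μ)‖ ^ 2 := by
    have := @norm_add_sq_real (Lp E 2 μ) _ _ (F - (Q : Lp E 2 μ)) (Q : Lp E 2 μ)
    rw [sub_add_cancel, horth] at this
    linarith
  have h1 : ‖F‖ ^ 2 = ∫ a, ‖f a‖ ^ 2 ∂μ :=
    norm_sq_Lp_eq_integral (MemLp.coeFn_toLp hf)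
  have h2 : ‖(Q : Lp E 2 μ)‖ ^ 2 = ∫ a, ‖(μ[f|m]) a‖ ^ 2 ∂μ :=
    norm_sq_Lp_eq_integral hc.symm
  have h3 : ‖F - (Q : Lp E 2 μ)‖ ^ 2 = ∫ a, ‖f a - (μ[f|m]) a‖ ^ 2 ∂μ := by
    refine norm_sq_Lp_eq_integral ?_
    filter_upwards [Lp.coeFn_sub F (Q : Lp E 2 μ), MemLp.coeFn_toLp hf, hc] with a ha hb hcc
    rw [ha, Pi.sub_apply, hb, hcc]
  rw [← h1, ← h2, ← h3, hdec]

lemma memℒp_two_condexp (hm : m ≤ m0) [IsFiniteMeasure μ] {f : α → E}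
    (hf : MemLp f 2 μ) : MemLp (μ[f|m]) 2 μ :=
  (Lp.memLp _).ae_eq (condexp_ae_eq_condexpL2' hm hf).symm

end Aux

/-- Equality cases in the inequality `E[‖X‖²] − E[‖E[X|𝒢]‖²] ≥ E[‖E[X|ℋ]‖²]`
for independent sub-σ-algebras `𝒢, ℋ` and centered square-integrable `X`:
equality holds iff `X − E[X|𝒢] = E[X|ℋ]` a.s.; in particular, equality implies
that `X − E[X|𝒢]` is a.s. equal to an `ℋ`-measurable random vector. -/
theorem sq_norm_condexp_indep_eq_iff {Ω : Type*} {mΩ : MeasurableSpace Ω}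
    (P : Measure Ω) [IsProbabilityMeasure P]
    {n : ℕ} (𝒢 ℋ : MeasurableSpace Ω) (h𝒢 : 𝒢 ≤ mΩ) (hℋ : ℋ ≤ mΩ)
    (hIndep : Indep 𝒢 ℋ P)
    (X : Ω → EuclideanSpace ℝ (Fin n)) (hX : MemLp X 2 P)
    (hcent : ∫ ω, X ω ∂P = 0) :
    (((∫ ω, ‖X ω‖ ^ 2 ∂P) - ∫ ω, ‖(P[X | 𝒢]) ω‖ ^ 2 ∂P) =
        ∫ ω, ‖(P[X | ℋ]) ω‖ ^ 2 ∂P ↔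
      ∀ᵐ ω ∂P, X ω - (P[X | 𝒢]) ω = (P[X | ℋ]) ω) ∧
    ((((∫ ω, ‖X ω‖ ^ 2 ∂P) - ∫ ω, ‖(P[X | 𝒢]) ω‖ ^ 2 ∂P) =
        ∫ ω, ‖(P[X | ℋ]) ω‖ ^ 2 ∂P) →
      ∃ Y : Ω → EuclideanSpace ℝ (Fin n), Measurable[ℋ] Y ∧
        ∀ᵐ ω ∂P, X ω - (P[X | 𝒢]) ω = Y ω) := by
  set G := P[X | 𝒢] with hGdef
  set H := P[X | ℋ] with hHdef
  set Z : Ω → EuclideanSpace ℝ (Fin n) := X - G with hZdef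
  have hG_mem : MemLp G 2 P := memℒp_two_condexp h𝒢 hX
  have hH_mem : MemLp H 2 P := memℒp_two_condexp hℋ hX
  have hZ_mem : MemLp Z 2 P := hX.sub hG_mem
  -- E[G|ℋ] = E[G] = 0 by independence and centering
  have hGint : ∫ ω, G ω ∂P = 0 := by
    rw [hGdef, integral_condExp h𝒢, hcent]
  have hG_H : P[G | ℋ] =ᵐ[P] fun _ => (0 : EuclideanSpace ℝ (Fin n)) := by
    have := condExp_indep_eq (μ := P) (f := G) h𝒢 hℋ
      (stronglyMeasurable_condExp) hIndep
    rw [hGint] at this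
    exact this
  -- E[Z|ℋ] = H
  have hZ_H : P[Z | ℋ] =ᵐ[P] H := by
    have h1 : P[Z | ℋ] =ᵐ[P] P[X | ℋ] - P[G | ℋ] :=
      condExp_sub (hX.integrable one_le_two) integrable_condExp ℋ
    filter_upwards [h1, hG_H] with ω h1ω h2ω
    rw [h1ω, Pi.sub_apply, h2ω, sub_zero]
  -- Pythagoras twice
  have pyth1 : ∫ ω, ‖X ω‖ ^ 2 ∂P =
      (∫ ω, ‖Z ω‖ ^ 2 ∂P) + ∫ ω, ‖G ω‖ ^ 2 ∂P :=
    integral_norm_sq_condexp_pythagoras h𝒢 hX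
  have pyth2 : ∫ ω, ‖Z ω‖ ^ 2 ∂P =
      (∫ ω, ‖Z ω - H ω‖ ^ 2 ∂P) + ∫ ω, ‖H ω‖ ^ 2 ∂P := by
    have := integral_norm_sq_condexp_pythagoras hℋ hZ_mem
    rw [this]
    congr 1
    · refine integral_congr_ae ?_
      filter_upwards [hZ_H] with ω hω
      rw [hω]
    · refine integral_congr_ae ?_
      filter_upwards [hZ_H] with ω hω
      rw [hω]
  -- the defect integral
  have hint_sq : Integrable (fun ω => ‖Z ω - H ω‖ ^ 2) P :=
    ((hZ_mem.sub hH_mem).norm).integrable_sq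
  have key : (((∫ ω, ‖X ω‖ ^ 2 ∂P) - ∫ ω, ‖G ω‖ ^ 2 ∂P) =
      ∫ ω, ‖H ω‖ ^ 2 ∂P) ↔ ∫ ω, ‖Z ω - H ω‖ ^ 2 ∂P = 0 := by
    constructor <;> intro h <;> linarith
  have hzero_iff : (∫ ω, ‖Z ω - H ω‖ ^ 2 ∂P = 0) ↔
      ∀ᵐ ω ∂P, X ω - G ω = H ω := by
    rw [integral_eq_zero_iff_of_nonneg (fun ω => by positivity) hint_sq]
    constructor
    · intro h
      filter_upwards [h] with ω hω
      have : ‖Z ω - H ω‖ = 0 := by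
        have := hω
        simp only [Pi.zero_apply] at this
        nlinarith [norm_nonneg (Z ω - H ω)]
      have : Z ω = H ω := by rwa [norm_eq_zero, sub_eq_zero] at this
      simpa [hZdef] using this
    · intro h
      filter_upwards [h] with ω hω
      have : Z ω = H ω := by simpa [hZdef] using hω
      simp [this]
  refine ⟨key.trans hzero_iff, fun h => ?_⟩
  refine ⟨H, ?_, (key.trans hzero_iff).mp h⟩
  exact (stronglyMeasurable_condExp (m := ℋ)).measurable
end

section
/- Let a, b : [0,1] → [0,∞] be measurable functions such that ∫_t^1 a(s) ds ≥ ∫_0^{1−t} b(s) ds for every t ∈ [0,1]. Then ∫_0^1 b(s)/s ds ≤ ∫_0^1 a(s)/(1−s) ds, where all integrals are Lebesgue integrals with values in [0,∞]. -/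
open MeasureTheory

open Set
open scoped ENNReal


lemma key_int (c : ℝ) (hc0 : 0 ≤ c) (hc1 : c < 1) :
    ∫⁻ t in Set.Ioc 0 c, ENNReal.ofReal (((1-t)^2)⁻¹) = ENNReal.ofReal (c / (1-c)) := by
  have hcont : ContinuousOn (fun t : ℝ => ((1-t)^2)⁻¹) (Set.Icc 0 c) := by
    apply ContinuousOn.inv₀
    · fun_prop
    · intro t ht
      exact pow_ne_zero _ (ne_of_gt (by linarith [ht.2]))
  have hint : IntegrableOn (fun t : ℝ => ((1-t)^2)⁻¹) (Set.Ioc 0 c) :=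
    hcont.integrableOn_Icc.mono_set Set.Ioc_subset_Icc_self
  rw [← ofReal_integral_eq_lintegral_ofReal hint
    (Filter.Eventually.of_forall fun t => by positivity)]
  congr 1
  have h1 : ∀ x : ℝ, ((1-x)^2)⁻¹ = (fun u : ℝ => u ^ (-2:ℤ)) (1 - x) := by
    intro x; simp [zpow_neg]
  calc ∫ t in Set.Ioc 0 c, ((1-t)^2)⁻¹
      = ∫ x in (0:ℝ)..c, (fun u : ℝ => u ^ (-2:ℤ)) (1 - x) := by
        rw [intervalIntegral.integral_of_le hc0]; simp_rw [h1]
    _ = ∫ u in (1-c)..(1:ℝ), u ^ (-2:ℤ) := by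
        rw [intervalIntegral.integral_comp_sub_left (fun u : ℝ => u ^ (-2:ℤ)) 1]
        norm_num
    _ = c / (1-c) := by
        rw [integral_zpow (Or.inr ⟨by norm_num, ?_⟩)]
        · have hne : (1:ℝ) - c ≠ 0 := by linarith
          norm_num
          field_simp
          ring
        · rw [Set.uIcc_of_le (by linarith)]
          intro h0
          have := (Set.mem_Icc.mp h0).1
          linarith


/-- If `∫_t^1 a(s) ds ≥ ∫_0^{1−t} b(s) ds` for every `t ∈ [0,1]`, then
`∫_0^1 b(s)/s ds ≤ ∫_0^1 a(s)/(1−s) ds` (extended-real-valued Lebesgue integrals). -/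
theorem lintegral_div_le_of_tail_bounds (a b : ℝ → ENNReal)
    (ha : Measurable a) (hb : Measurable b)
    (h : ∀ t ∈ Set.Icc (0 : ℝ) 1,
      ∫⁻ s in Set.Ioc (0 : ℝ) (1 - t), b s ≤ ∫⁻ s in Set.Ioc t (1 : ℝ), a s) :
    ∫⁻ s in Set.Ioc (0 : ℝ) 1, b s / ENNReal.ofReal s ≤
      ∫⁻ s in Set.Ioc (0 : ℝ) 1, a s / ENNReal.ofReal (1 - s) := by
  set S : Set ℝ := Set.Ioc 0 1 with hS
  set k : ℝ → ℝ≥0∞ := fun t => ENNReal.ofReal (((1-t)^2)⁻¹) with hk_def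
  have hk : Measurable k := by fun_prop
  have hA : MeasurableSet {p : ℝ × ℝ | p.1 + p.2 ≤ 1} :=
    measurableSet_le (measurable_fst.add measurable_snd) measurable_const
  have hB : MeasurableSet {p : ℝ × ℝ | p.1 < p.2} :=
    measurableSet_lt measurable_fst measurable_snd
  set χA : ℝ × ℝ → ℝ≥0∞ := Set.indicator {p : ℝ × ℝ | p.1 + p.2 ≤ 1} 1 with hχA
  set χB : ℝ × ℝ → ℝ≥0∞ := Set.indicator {p : ℝ × ℝ | p.1 < p.2} 1 with hχB
  have hmS : MeasurableSet S := measurableSet_Ioc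
  have hkey : ∀ (f : ℝ → ℝ≥0∞), Measurable f → ∀ (A : Set ℝ), MeasurableSet A → ∀ c : ℝ≥0∞,
      (∫⁻ x in S, c * A.indicator f x) = c * ∫⁻ x in A ∩ S, f x := by
    intro f hf A hA' c
    rw [lintegral_const_mul _ (hf.indicator hA'), lintegral_indicator hA',
      Measure.restrict_restrict hA']
  -- b-side pointwise identity
  have hbpt : ∀ s ∈ S, b s / ENNReal.ofReal s
      = b s + ∫⁻ t in S, b s * (k t * χA (s, t)) := by
    intro s hs
    obtain ⟨hs0, hs1⟩ := hs
    have e1 : ∀ t, b s * (k t * χA (s, t)) = b s * (Set.Iic (1-s)).indicator k t := by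
      intro t
      simp only [hχA, Set.indicator_apply, Set.mem_setOf_eq, Set.mem_Iic, Pi.one_apply]
      by_cases hc : s + t ≤ 1
      · rw [if_pos hc, if_pos (by linarith)]; ring
      · rw [if_neg hc, if_neg (by intro hh; exact hc (by linarith))]; ring
    have hset : Set.Iic (1-s) ∩ S = Set.Ioc 0 (1-s) := by
      ext x
      simp only [Set.mem_inter_iff, Set.mem_Iic, hS, Set.mem_Ioc]
      constructor
      · rintro ⟨h1, h2, h3⟩; exact ⟨h2, h1⟩
      · rintro ⟨h1, h2⟩; exact ⟨h2, h1, by linarith⟩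
    rw [lintegral_congr e1, hkey k hk _ measurableSet_Iic (b s), hset,
      key_int (1-s) (by linarith) (by linarith)]
    have h2 : (ENNReal.ofReal s)⁻¹ = 1 + ENNReal.ofReal ((1-s)/(1-(1-s))) := by
      rw [show (1:ℝ) - (1-s) = s by ring,
        ← ENNReal.ofReal_one,
        ← ENNReal.ofReal_add (by norm_num) (div_nonneg (by linarith) hs0.le),
        ← ENNReal.ofReal_inv_of_pos hs0]
      congr 1
      field_simp
      ring
    rw [ENNReal.div_eq_inv_mul, h2, add_mul, one_mul, mul_comm, add_comm]
  -- middle comparison for fixed t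
  have hmid : ∀ t ∈ S, (∫⁻ s in S, b s * (k t * χA (s, t)))
      ≤ ∫⁻ s in S, k t * (a s * χB (t, s)) := by
    intro t ht
    obtain ⟨ht0, ht1⟩ := ht
    have hL : (∫⁻ s in S, b s * (k t * χA (s, t))) = k t * ∫⁻ s in Set.Ioc 0 (1-t), b s := by
      have e1 : ∀ s, b s * (k t * χA (s, t)) = k t * (Set.Iic (1-t)).indicator b s := by
        intro s
        simp only [hχA, Set.indicator_apply, Set.mem_setOf_eq, Set.mem_Iic, Pi.one_apply]
        by_cases hc : s + t ≤ 1
        · rw [if_pos hc, if_pos (by linarith)]; ring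
        · rw [if_neg hc, if_neg (by intro hh; exact hc (by linarith))]; ring
      have hset : Set.Iic (1-t) ∩ S = Set.Ioc 0 (1-t) := by
        ext x
        simp only [Set.mem_inter_iff, Set.mem_Iic, hS, Set.mem_Ioc]
        constructor
        · rintro ⟨h1, h2, h3⟩; exact ⟨h2, h1⟩
        · rintro ⟨h1, h2⟩; exact ⟨h2, h1, by linarith⟩
      rw [lintegral_congr e1, hkey b hb _ measurableSet_Iic (k t), hset]
    have hR : (∫⁻ s in S, k t * (a s * χB (t, s))) = k t * ∫⁻ s in Set.Ioc t 1, a s := by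
      have e1 : ∀ s, k t * (a s * χB (t, s)) = k t * (Set.Ioi t).indicator a s := by
        intro s
        simp only [hχB, Set.indicator_apply, Set.mem_setOf_eq, Set.mem_Ioi, Pi.one_apply]
        by_cases hc : t < s
        · rw [if_pos hc, if_pos hc]; ring
        · rw [if_neg hc, if_neg hc]; ring
      have hset : Set.Ioi t ∩ S = Set.Ioc t 1 := by
        ext x
        simp only [Set.mem_inter_iff, Set.mem_Ioi, hS, Set.mem_Ioc]
        constructor
        · rintro ⟨h1, h2, h3⟩; exact ⟨h1, h3⟩
        · rintro ⟨h1, h2⟩; exact ⟨h1, by linarith, h2⟩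
      rw [lintegral_congr e1, hkey a ha _ measurableSet_Ioi (k t), hset]
    rw [hL, hR]
    exact mul_le_mul_of_nonneg_left (h t ⟨ht0.le, ht1⟩) (zero_le)
  -- a-side pointwise bound
  have hapt : ∀ s ∈ S, (a s + ∫⁻ t in S, k t * (a s * χB (t, s)))
      ≤ a s / ENNReal.ofReal (1-s) := by
    intro s hs
    obtain ⟨hs0, hs1⟩ := hs
    have h1 : (∫⁻ t in S, k t * (a s * χB (t, s))) = a s * ∫⁻ t in Set.Ioc 0 s, k t := by
      have e1 : ∀ t, k t * (a s * χB (t, s)) = a s * (Set.Iio s).indicator k t := by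
        intro t
        simp only [hχB, Set.indicator_apply, Set.mem_setOf_eq, Set.mem_Iio, Pi.one_apply]
        by_cases hc : t < s
        · rw [if_pos hc, if_pos hc]; ring
        · rw [if_neg hc, if_neg hc]; ring
      have hset : Set.Iio s ∩ S = Set.Ioo 0 s := by
        ext x
        simp only [Set.mem_inter_iff, Set.mem_Iio, hS, Set.mem_Ioc, Set.mem_Ioo]
        constructor
        · rintro ⟨h1, h2, h3⟩; exact ⟨h2, h1⟩
        · rintro ⟨h1, h2⟩; exact ⟨h2, h1, by linarith⟩
      rw [lintegral_congr e1, hkey k hk _ measurableSet_Iio (a s), hset,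
        Measure.restrict_congr_set Ioo_ae_eq_Ioc]
    rw [h1]
    rcases lt_or_eq_of_le hs1 with hlt | heq
    · rw [key_int s hs0.le hlt]
      have h2 : (1:ℝ≥0∞) + ENNReal.ofReal (s/(1-s)) = (ENNReal.ofReal (1-s))⁻¹ := by
        have h1s : (1:ℝ) - s ≠ 0 := by linarith
        rw [← ENNReal.ofReal_one,
          ← ENNReal.ofReal_add (by norm_num) (div_nonneg hs0.le (by linarith)),
          ← ENNReal.ofReal_inv_of_pos (by linarith)]
        congr 1
        field_simp
        ring
      apply le_of_eq
      calc a s + a s * ENNReal.ofReal (s/(1-s))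
          = a s * (1 + ENNReal.ofReal (s/(1-s))) := by rw [mul_add, mul_one]
        _ = a s * (ENNReal.ofReal (1-s))⁻¹ := by rw [h2]
        _ = a s / ENNReal.ofReal (1-s) := (div_eq_mul_inv _ _).symm
    · rcases eq_or_ne (a s) 0 with ha0 | ha0
      · simp [ha0]
      · rw [← heq]
        norm_num
        rw [ENNReal.div_zero ha0]
        exact le_top
  -- measurability for swaps
  have hFm : AEMeasurable (Function.uncurry fun s t => b s * (k t * χA (s, t)))
      ((volume.restrict S).prod (volume.restrict S)) :=
    ((hb.comp measurable_fst).mul ((hk.comp measurable_snd).mul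
      (measurable_one.indicator hA))).aemeasurable
  have hGm : AEMeasurable (Function.uncurry fun t s => k t * (a s * χB (t, s)))
      ((volume.restrict S).prod (volume.restrict S)) :=
    ((hk.comp measurable_fst).mul ((ha.comp measurable_snd).mul
      (measurable_one.indicator hB))).aemeasurable
  calc ∫⁻ s in S, b s / ENNReal.ofReal s
      = ∫⁻ s in S, (b s + ∫⁻ t in S, b s * (k t * χA (s, t))) :=
        setLIntegral_congr_fun hmS hbpt
    _ = (∫⁻ s in S, b s) + ∫⁻ s in S, ∫⁻ t in S, b s * (k t * χA (s, t)) :=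
        lintegral_add_left hb _
    _ = (∫⁻ s in S, b s) + ∫⁻ t in S, ∫⁻ s in S, b s * (k t * χA (s, t)) := by
        rw [lintegral_lintegral_swap hFm]
    _ ≤ (∫⁻ s in S, a s) + ∫⁻ t in S, ∫⁻ s in S, k t * (a s * χB (t, s)) := by
        refine add_le_add ?_ (lintegral_mono_ae ?_)
        · have := h 0 ⟨le_refl 0, zero_le_one⟩
          norm_num at this
          exact this
        · filter_upwards [ae_restrict_mem hmS] with t ht using hmid t ht
    _ = (∫⁻ s in S, a s) + ∫⁻ s in S, ∫⁻ t in S, k t * (a s * χB (t, s)) := by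
        rw [lintegral_lintegral_swap hGm]
    _ = ∫⁻ s in S, (a s + ∫⁻ t in S, k t * (a s * χB (t, s))) :=
        (lintegral_add_left ha _).symm
    _ ≤ ∫⁻ s in S, a s / ENNReal.ofReal (1-s) :=
        lintegral_mono_ae (by filter_upwards [ae_restrict_mem hmS] with s hs using hapt s hs)
end

section
/- Let (Ω, ℬ, P) be a probability space, let (𝒢_t)_{t∈[0,1]} be an increasing family of sub-σ-algebras of ℬ and (ℋ_t)_{t∈[0,1]} a decreasing family of sub-σ-algebras of ℬ such that, for every t ∈ [0,1], the σ-algebras 𝒢_t and ℋ_t are independent. Let X : Ω → ℝⁿ be square-integrable and 𝒢_1-measurable, and set M_t := E[X | 𝒢_t]. Let D ⊆ [0,1] be a set such that for every t ∈ D the random vector X − M_t is almost surely equal to an ℋ_t-measurable random vector. Then for every finite sequence t_1 ≤ t_2 ≤ ⋯ ≤ t_k of points of D, the random vectors M_{t_1}, M_{t_2} − M_{t_1}, …, M_{t_k} − M_{t_{k−1}}, X − M_{t_k} are mutually independent; in particular, the process (M_t)_{t ∈ D} has independent increments over D. -/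
open MeasureTheory ProbabilityTheory

/-- The extended sequence `0, M_{t_0}, M_{t_1}, …, M_{t_k}, X`, where
`M_s = E[X | 𝒢 s]`: its consecutive differences are the increments
`M_{t_0}, M_{t_1} − M_{t_0}, …, M_{t_k} − M_{t_{k−1}}, X − M_{t_k}`. -/
noncomputable def extendedProcess {Ω : Type*} {mΩ : MeasurableSpace Ω} (P : Measure Ω)
    {n : ℕ} (𝒢 : ℝ → MeasurableSpace Ω) (X : Ω → EuclideanSpace ℝ (Fin n))
    {k : ℕ} (t : Fin (k + 1) → ℝ) (j : Fin (k + 3)) : Ω → EuclideanSpace ℝ (Fin n) :=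
  if h0 : j.val = 0 then 0
  else if hl : j.val = k + 2 then X
  else P[X | 𝒢 (t ⟨j.val - 1, by omega⟩)]

lemma indepFun_of_measurable' {Ω E F : Type*} {mΩ : MeasurableSpace Ω}
    {mE : MeasurableSpace E} {mF : MeasurableSpace F} {P : Measure Ω}
    {m₁ m₂ : MeasurableSpace Ω} (h : Indep m₁ m₂ P)
    {f : Ω → E} {g : Ω → F} (hf : Measurable[m₁] f) (hg : Measurable[m₂] g) :
    IndepFun f g P := by
  rw [IndepFun_iff]
  intro t1 t2 h1 h2
  exact (Indep_iff _ _ _).1 h t1 t2 (hf.comap_le _ h1) (hg.comap_le _ h2)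

lemma iIndepFun_of_prefix_indep {Ω : Type*} {mΩ : MeasurableSpace Ω} {P : Measure Ω}
    [IsProbabilityMeasure P] {E : Type*} {mE : MeasurableSpace E} {m : ℕ}
    (f : Fin m → Ω → E)
    (h : ∀ j : Fin m, IndepFun
      (fun ω (i : Fin j.val) => f (Fin.castLE j.isLt.le i) ω) (f j) P) :
    iIndepFun f P := by
  rw [iIndepFun_iff_measure_inter_preimage_eq_mul]
  intro S
  induction S using Finset.strongInduction with
  | _ S ih =>
    intro sets hsets
    rcases S.eq_empty_or_nonempty with rfl | hS
    · simp
    · set j := S.max' hS with hj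
      have hjS : j ∈ S := S.max'_mem hS
      have hlt : ∀ i ∈ S.erase j, i < j := fun i hi =>
        lt_of_le_of_ne (S.le_max' i (Finset.mem_of_mem_erase hi))
          (Finset.ne_of_mem_erase hi)
      set g : Ω → (Fin j.val → E) := fun ω i => f (Fin.castLE j.isLt.le i) ω with hg
      set T : Set (Fin j.val → E) :=
        ⋂ (i : Fin m) (hi : i ∈ S.erase j), (fun x => x ⟨i.val, hlt i hi⟩) ⁻¹' sets i with hT
      have hTmeas : MeasurableSet T := by
        refine MeasurableSet.iInter fun i => MeasurableSet.iInter fun hi => ?_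
        exact (measurable_pi_apply _) (hsets i (Finset.mem_of_mem_erase hi))
      have hpre : g ⁻¹' T = ⋂ i ∈ S.erase j, f i ⁻¹' sets i := by
        ext ω
        simp only [hT, hg, Set.mem_preimage, Set.mem_iInter]
        constructor
        · intro H i hi
          have := H i hi
          simpa [Fin.castLE] using this
        · intro H i hi
          simpa [Fin.castLE] using H i hi
      have hSsplit : (⋂ i ∈ S, f i ⁻¹' sets i)
          = (g ⁻¹' T) ∩ (f j ⁻¹' sets j) := by
        conv_lhs => rw [← Finset.insert_erase hjS, Finset.set_biInter_insert]
        rw [hpre, Set.inter_comm]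
      have hkey := (indepFun_iff_measure_inter_preimage_eq_mul.1 (h j)) T (sets j)
        hTmeas (hsets j hjS)
      have hprev := ih (S.erase j) (Finset.erase_ssubset hjS)
        (fun i hi => hsets i (Finset.mem_of_mem_erase hi))
      rw [hSsplit, hkey, hpre, hprev, ← Finset.prod_erase_mul S _ hjS]

/-- If `(𝒢_t)` is increasing, `(ℋ_t)` is decreasing, `𝒢_t` and `ℋ_t` are independent
for every `t ∈ [0,1]`, `X` is centered, square-integrable and `𝒢_1`-measurable,
and for every `t` in a set `D ⊆ [0,1]` the vector `X − E[X|𝒢_t]` is a.s. equal to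
an `ℋ_t`-measurable random vector, then for every monotone finite sequence
`t_0 ≤ ⋯ ≤ t_k` in `D` the random vectors
`M_{t_0}, M_{t_1} − M_{t_0}, …, M_{t_k} − M_{t_{k−1}}, X − M_{t_k}` are mutually
independent, where `M_s := E[X | 𝒢_s]`. -/
theorem independent_increments_of_time_reversed_measurability
    {Ω : Type*} {mΩ : MeasurableSpace Ω} (P : Measure Ω) [IsProbabilityMeasure P]
    {n : ℕ} (𝒢 ℋ : ℝ → MeasurableSpace Ω)
    (h𝒢le : ∀ t, 𝒢 t ≤ mΩ) (hℋle : ∀ t, ℋ t ≤ mΩ)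
    (h𝒢mono : ∀ s t : ℝ, s ≤ t → 𝒢 s ≤ 𝒢 t)
    (hℋanti : ∀ s t : ℝ, s ≤ t → ℋ t ≤ ℋ s)
    (hIndep : ∀ t ∈ Set.Icc (0 : ℝ) 1, Indep (𝒢 t) (ℋ t) P)
    (X : Ω → EuclideanSpace ℝ (Fin n)) (hX : MemLp X 2 P)
    (hXmeas : Measurable[𝒢 1] X) (hcent : ∫ ω, X ω ∂P = 0)
    (D : Set ℝ) (hD : D ⊆ Set.Icc (0 : ℝ) 1)
    (hrev : ∀ t ∈ D, ∃ Y : Ω → EuclideanSpace ℝ (Fin n), Measurable[ℋ t] Y ∧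
      ∀ᵐ ω ∂P, X ω - (P[X | 𝒢 t]) ω = Y ω)
    (k : ℕ) (t : Fin (k + 1) → ℝ) (ht : Monotone t) (htD : ∀ i, t i ∈ D) :
    iIndepFun
      (fun i : Fin (k + 2) =>
        extendedProcess P 𝒢 X t i.succ - extendedProcess P 𝒢 X t i.castSucc) P := by
  classical
  choose Y hYmeas hYae using fun i : Fin (k+1) => hrev (t i) (htD i)
  have extz : ∀ (j : Fin (k+3)), j.val = 0 → extendedProcess P 𝒢 X t j = 0 := by
    intro j hj; simp [extendedProcess, hj]
  have extl : ∀ (j : Fin (k+3)), j.val = k + 2 → extendedProcess P 𝒢 X t j = X := by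
    intro j hj; simp [extendedProcess, hj]
  have extm : ∀ (j : Fin (k+3)) (h1 : j.val ≠ 0) (h2 : j.val ≠ k+2) (v : Fin (k+1)),
      v.val = j.val - 1 → extendedProcess P 𝒢 X t j = P[X | 𝒢 (t v)] := by
    intro j h1 h2 v hv
    have hv' : v = ⟨j.val - 1, by have := j.isLt; omega⟩ := Fin.ext hv
    rw [hv']
    simp [extendedProcess, h1, h2]
  have extMeas : ∀ (j : Fin (k+3)), j.val ≤ k+1 → ∀ (v : Fin (k+1)), j.val - 1 ≤ v.val →
      Measurable[𝒢 (t v)] (extendedProcess P 𝒢 X t j) := by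
    intro j h2 v hv
    by_cases h0 : j.val = 0
    · rw [extz j h0]; exact measurable_const
    · have h2' : j.val ≠ k + 2 := by omega
      set w : Fin (k+1) := ⟨j.val - 1, by omega⟩ with hw
      rw [extm j h0 h2' w rfl]
      exact stronglyMeasurable_condExp.measurable.mono
        (h𝒢mono _ _ (ht (show w ≤ v from hv))) le_rfl
  refine iIndepFun_of_prefix_indep _ fun j => ?_
  set q : Fin (k+1) := ⟨j.val - 1, by have := j.isLt; omega⟩ with hq
  have hqIcc : t q ∈ Set.Icc (0:ℝ) 1 := hD (htD q)
  have hgmeas : Measurable[𝒢 (t q)] (fun ω (i : Fin j.val) =>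
      (extendedProcess P 𝒢 X t (Fin.castLE j.isLt.le i).succ
        - extendedProcess P 𝒢 X t (Fin.castLE j.isLt.le i).castSucc) ω) := by
    letI : MeasurableSpace Ω := 𝒢 (t q)
    rw [measurable_pi_iff]
    intro i
    have hiv : i.val < j.val := i.isLt
    have hjv : j.val < k + 2 := j.isLt
    have hA : Measurable[𝒢 (t q)]
        (extendedProcess P 𝒢 X t (Fin.castLE j.isLt.le i).succ) := by
      refine extMeas _ (by simp [Fin.val_succ]; omega) q ?_
      simp only [Fin.val_succ, Fin.coe_castLE, hq]
      omega
    have hB : Measurable[𝒢 (t q)]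
        (extendedProcess P 𝒢 X t (Fin.castLE j.isLt.le i).castSucc) := by
      refine extMeas _ (by simp [Fin.coe_castSucc]; omega) q ?_
      simp only [Fin.coe_castSucc, Fin.coe_castLE, hq]
      omega
    exact hA.sub hB
  by_cases hj0 : j.val = 0
  · have hgH : Measurable[ℋ (t q)] (fun ω (i : Fin j.val) =>
        (extendedProcess P 𝒢 X t (Fin.castLE j.isLt.le i).succ
          - extendedProcess P 𝒢 X t (Fin.castLE j.isLt.le i).castSucc) ω) := by
      letI : MeasurableSpace Ω := ℋ (t q)
      rw [measurable_pi_iff]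
      exact fun i => absurd i.isLt (by omega)
    have hfG : Measurable[𝒢 (t q)]
        (extendedProcess P 𝒢 X t j.succ - extendedProcess P 𝒢 X t j.castSucc) := by
      have hA : Measurable[𝒢 (t q)] (extendedProcess P 𝒢 X t j.succ) :=
        extMeas _ (by simp [Fin.val_succ, hj0]) q (by simp [Fin.val_succ, hj0])
      have hB : Measurable[𝒢 (t q)] (extendedProcess P 𝒢 X t j.castSucc) :=
        extMeas _ (by simp [Fin.coe_castSucc, hj0]) q (by simp [Fin.coe_castSucc, hj0])
      exact hA.sub hB
    exact indepFun_of_measurable' ((hIndep _ hqIcc).symm) hgH hfG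
  · have hqval : q.val = j.val - 1 := rfl
    by_cases hjl : j.val = k + 1
    · -- last increment : X - M_{t_k}
      have base : IndepFun (fun ω (i : Fin j.val) =>
          (extendedProcess P 𝒢 X t (Fin.castLE j.isLt.le i).succ
            - extendedProcess P 𝒢 X t (Fin.castLE j.isLt.le i).castSucc) ω) (Y q) P :=
        indepFun_of_measurable' (hIndep _ hqIcc) hgmeas (hYmeas q)
      refine base.congr Filter.EventuallyEq.rfl ?_
      have e1 : extendedProcess P 𝒢 X t j.succ = X :=
        extl _ (by simp [Fin.val_succ, hjl])
      have e2 : extendedProcess P 𝒢 X t j.castSucc = P[X | 𝒢 (t q)] :=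
        extm _ (by simp [Fin.coe_castSucc, hj0]) (by simp [Fin.coe_castSucc]; omega) q
          (by simp [Fin.coe_castSucc, hqval])
      filter_upwards [hYae q] with ω hω
      show Y q ω = _
      rw [Pi.sub_apply, e1, e2]
      exact hω.symm
    · -- middle increment : M_{t_j} - M_{t_{j-1}}
      have hjk : j.val ≤ k := by have := j.isLt; omega
      set r : Fin (k+1) := ⟨j.val, by omega⟩ with hr
      have hqr : q ≤ r := by
        simp only [Fin.mk_le_mk, hq, hr]
        omega
      have hWmeas : Measurable[ℋ (t q)] (fun ω => Y q ω - Y r ω) :=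
        (hYmeas q).sub ((hYmeas r).mono (hℋanti _ _ (ht hqr)) le_rfl)
      have base : IndepFun (fun ω (i : Fin j.val) =>
          (extendedProcess P 𝒢 X t (Fin.castLE j.isLt.le i).succ
            - extendedProcess P 𝒢 X t (Fin.castLE j.isLt.le i).castSucc) ω)
          (fun ω => Y q ω - Y r ω) P :=
        indepFun_of_measurable' (hIndep _ hqIcc) hgmeas hWmeas
      refine base.congr Filter.EventuallyEq.rfl ?_
      have e1 : extendedProcess P 𝒢 X t j.succ = P[X | 𝒢 (t r)] :=
        extm _ (by simp [Fin.val_succ]) (by simp [Fin.val_succ]; omega) r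
          (by simp [Fin.val_succ, hr])
      have e2 : extendedProcess P 𝒢 X t j.castSucc = P[X | 𝒢 (t q)] :=
        extm _ (by simp [Fin.coe_castSucc, hj0]) (by simp [Fin.coe_castSucc]; omega) q
          (by simp [Fin.coe_castSucc, hqval])
      filter_upwards [hYae q, hYae r] with ω h1 h2
      show Y q ω - Y r ω = _
      rw [Pi.sub_apply, e1, e2, ← h1, ← h2]
      abel
end

section
/- For every α > 0, the Lebesgue integral over t ∈ [0,1] of (α/(1 − t + αt) − 1)² / (1 − t) equals α − 1 − log α; that is, ∫_0^1 (α/(1 + (α−1)t) − 1)²/(1−t) dt = α − 1 − log α. Consequently ½∫_0^1 (α/(1−t+αt) − 1)²/(1−t) dt = D(N(0,α)‖N(0,1)). -/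
open MeasureTheory ProbabilityTheory ENNReal Real
open scoped NNReal

/-- The relative entropy (Kullback–Leibler divergence) `D(μ‖γ)`. -/
noncomputable def relEntropy {E : Type*} [MeasurableSpace E] (μ γ : Measure E) : ℝ≥0∞ :=
  open scoped Classical in
  if μ ≪ γ ∧ Integrable (llr μ γ) μ then ENNReal.ofReal (∫ x, llr μ γ x ∂μ) else ∞

lemma integral_sq_exp {b : ℝ} (hb : 0 < b) :
    ∫ x : ℝ, x ^ 2 * Real.exp (-b * x ^ 2) = Real.sqrt (π / b) / (2 * b) := by
  have habs := integral_comp_abs (f := fun y : ℝ => y ^ 2 * Real.exp (-b * y ^ 2))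
  simp only [sq_abs] at habs
  rw [habs]
  have h2 : ∫ x in Set.Ioi (0:ℝ), x ^ 2 * Real.exp (-b * x ^ 2)
      = ∫ x in Set.Ioi (0:ℝ), x ^ (2:ℝ) * Real.exp (-b * x ^ (2:ℝ)) := by
    refine setIntegral_congr_fun measurableSet_Ioi (fun x _ => ?_)
    rw [show (2:ℝ) = ((2:ℕ):ℝ) by norm_num, Real.rpow_natCast]
  rw [h2, integral_rpow_mul_exp_neg_mul_rpow (by norm_num) (by norm_num) hb]
  have hg : Real.Gamma (((2:ℝ) + 1) / 2) = Real.sqrt π / 2 := by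
    rw [show ((2:ℝ)+1)/2 = 1/2 + 1 by norm_num,
      Real.Gamma_add_one (by norm_num), Real.Gamma_one_half_eq]
    ring
  rw [hg]
  have hsb : (0:ℝ) < Real.sqrt b := Real.sqrt_pos.mpr hb
  have hb32 : b ^ (-((2:ℝ) + 1) / 2) = (Real.sqrt b)⁻¹ / b := by
    rw [show (-((2:ℝ)+1)/2) = (-(1/2)) + (-1) by norm_num, Real.rpow_add hb,
      Real.rpow_neg_one, Real.rpow_neg hb.le, ← Real.sqrt_eq_rpow]
    ring
  rw [hb32, Real.sqrt_div pi_nonneg b]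
  have : Real.sqrt b ≠ 0 := hsb.ne'
  field_simp

lemma gaussian_second_moment {v : ℝ≥0} (hv : v ≠ 0) :
    ∫ x : ℝ, x ^ 2 * gaussianPDFReal 0 v x = (v : ℝ) := by
  have hv' : (0:ℝ) < v := by positivity
  have hb : (0:ℝ) < (2 * (v:ℝ))⁻¹ := by positivity
  have h1 : ∀ x : ℝ, x ^ 2 * gaussianPDFReal 0 v x
      = (Real.sqrt (2 * π * v))⁻¹ * (x ^ 2 * Real.exp (-(2 * (v:ℝ))⁻¹ * x ^ 2)) := by
    intro x
    rw [gaussianPDFReal]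
    ring_nf
  simp_rw [h1]
  rw [integral_const_mul, integral_sq_exp hb]
  have h2 : π / ((2 * (v:ℝ))⁻¹) = 2 * π * v := by field_simp
  have h3 : 2 * ((2 * (v:ℝ))⁻¹) = (v:ℝ)⁻¹ := by field_simp
  rw [h2, h3]
  have hs : (0:ℝ) < Real.sqrt (2 * π * v) := Real.sqrt_pos.mpr (by positivity)
  field_simp

lemma integrable_sq_gaussianPDFReal {v : ℝ≥0} (hv : v ≠ 0) :
    Integrable (fun x : ℝ => x ^ 2 * gaussianPDFReal 0 v x) := by
  have hv' : (0:ℝ) < v := by positivity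
  have hb : (0:ℝ) < (2 * (v:ℝ))⁻¹ := by positivity
  have h0 : Integrable (fun x : ℝ => x ^ (2:ℝ) * Real.exp (-(2 * (v:ℝ))⁻¹ * x ^ 2)) :=
    integrable_rpow_mul_exp_neg_mul_sq hb (by norm_num : (-1:ℝ) < 2)
  have h := h0.const_mul ((Real.sqrt (2 * π * v))⁻¹)
  refine h.congr (Filter.Eventually.of_forall fun x => ?_)
  have h2 : x ^ (2:ℝ) = x ^ (2:ℕ) := by
    rw [← Real.rpow_natCast x 2]; norm_num
  simp only [h2, gaussianPDFReal]
  ring_nf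

lemma aux_part1 (α : ℝ) (hα : 0 < α) :
    (∫ t in Set.Ioc (0 : ℝ) 1, (α / (1 - t + α * t) - 1) ^ 2 / (1 - t)) =
      α - 1 - Real.log α := by
  set c : ℝ := α - 1 with hc
  have hpos : ∀ t ∈ Set.uIcc (0:ℝ) 1, 0 < 1 + c * t := by
    intro t ht
    rw [Set.uIcc_of_le (by norm_num)] at ht
    obtain ⟨h0, h1⟩ := ht
    have : 1 + c * t = (1 - t) + α * t := by ring
    rw [this]
    rcases lt_or_ge t 1 with h | h
    · have := mul_nonneg hα.le h0
      linarith
    · have ht1 : t = 1 := le_antisymm h1 h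
      simp [ht1]; linarith
  have h1 : (∫ t in Set.Ioc (0 : ℝ) 1, (α / (1 - t + α * t) - 1) ^ 2 / (1 - t))
      = ∫ t in (0:ℝ)..1, (α / (1 - t + α * t) - 1) ^ 2 / (1 - t) := by
    rw [intervalIntegral.integral_of_le (by norm_num)]
  have h2 : ∀ t ∈ Set.uIcc (0:ℝ) 1,
      (α / (1 - t + α * t) - 1) ^ 2 / (1 - t) = c ^ 2 * (1 - t) / (1 + c * t) ^ 2 := by
    intro t ht
    have hp := hpos t ht
    have hne : 1 + c * t ≠ 0 := hp.ne'
    have heq : 1 - t + α * t = 1 + c * t := by ring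
    rw [heq]
    have hnum : α / (1 + c * t) - 1 = c * (1 - t) / (1 + c * t) := by
      field_simp
      ring
    rw [hnum]
    rcases eq_or_ne t 1 with h | h
    · simp [h]
    · have h1t : 1 - t ≠ 0 := sub_ne_zero.mpr (Ne.symm h)
      field_simp
  have h3 : (∫ t in (0:ℝ)..1, (α / (1 - t + α * t) - 1) ^ 2 / (1 - t))
      = ∫ t in (0:ℝ)..1, c ^ 2 * (1 - t) / (1 + c * t) ^ 2 :=
    intervalIntegral.integral_congr h2
  have hderiv : ∀ t ∈ Set.uIcc (0:ℝ) 1,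
      HasDerivAt (fun t => -α / (1 + c * t) - Real.log (1 + c * t))
        (c ^ 2 * (1 - t) / (1 + c * t) ^ 2) t := by
    intro t ht
    have hp := hpos t ht
    have hne : 1 + c * t ≠ 0 := hp.ne'
    have hl : HasDerivAt (fun t : ℝ => 1 + c * t) c t := by
      simpa using ((hasDerivAt_id t).const_mul c).const_add 1
    have hd1 : HasDerivAt (fun t : ℝ => -α / (1 + c * t))
        ((0 * (1 + c * t) - (-α) * c) / (1 + c * t) ^ 2) t :=
      (hasDerivAt_const t (-α)).div hl hne
    have hd2 : HasDerivAt (fun t : ℝ => Real.log (1 + c * t)) (c / (1 + c * t)) t :=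
      hl.log hne
    have := hd1.sub hd2
    refine this.congr_deriv ?_
    field_simp
    ring
  have hint : IntervalIntegrable (fun t => c ^ 2 * (1 - t) / (1 + c * t) ^ 2) volume 0 1 := by
    apply ContinuousOn.intervalIntegrable
    exact ContinuousOn.div (by fun_prop) (by fun_prop)
      (fun t ht => pow_ne_zero 2 (hpos t ht).ne')
  have h4 := intervalIntegral.integral_eq_sub_of_hasDerivAt hderiv hint
  rw [h1, h3, h4]
  have h1c : 1 + c * 1 = α := by ring
  have e0 : 1 + c * 0 = 1 := by ring
  rw [h1c, e0, Real.log_one, neg_div, div_self hα.ne']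
  ring

lemma aux_part2 (α : ℝ) (hα : 0 < α) :
    relEntropy (gaussianReal 0 α.toNNReal) (gaussianReal 0 1)
      = ENNReal.ofReal ((1 / 2) * (α - 1 - Real.log α)) := by
  set v : ℝ≥0 := α.toNNReal with hvdef
  have hv : v ≠ 0 := by
    simp only [hvdef, ne_eq, Real.toNNReal_eq_zero, not_le]
    exact hα
  have hvα : (v : ℝ) = α := Real.coe_toNNReal α hα.le
  set μ : Measure ℝ := gaussianReal 0 v with hμdef
  set γ : Measure ℝ := gaussianReal 0 1 with hγdef
  have hμvol : μ ≪ (volume : Measure ℝ) := gaussianReal_absolutelyContinuous 0 hv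
  have h_ac : μ ≪ γ := hμvol.trans (gaussianReal_absolutelyContinuous' 0 one_ne_zero)
  set L : ℝ → ℝ := fun x => (1 / 2 - (2 * α)⁻¹) * x ^ 2 - Real.log α / 2 with hLdef
  -- rnDeriv computation
  have hrn : μ.rnDeriv γ =ᵐ[volume]
      fun x => (gaussianPDF 0 1 x)⁻¹ * gaussianPDF 0 v x := by
    have hγ' : γ = volume.withDensity (gaussianPDF 0 1) :=
      gaussianReal_of_var_ne_zero 0 one_ne_zero
    rw [hγ']
    have h := Measure.rnDeriv_withDensity_right μ volume
      (measurable_gaussianPDF 0 1).aemeasurable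
      (Filter.Eventually.of_forall fun x => (gaussianPDF_pos 0 one_ne_zero x).ne')
      (Filter.Eventually.of_forall fun x => ENNReal.ofReal_ne_top)
    have h2 := rnDeriv_gaussianReal 0 v
    filter_upwards [h, h2] with x hx hx2
    rw [hx, hx2]
  have llr_eq : llr μ γ =ᵐ[μ] L := by
    filter_upwards [hμvol.ae_eq hrn] with x hx
    rw [llr_def]
    simp only [hx]
    have hp1 : 0 < gaussianPDFReal 0 1 x := gaussianPDFReal_pos 0 1 x one_ne_zero
    have hpv : 0 < gaussianPDFReal 0 v x := gaussianPDFReal_pos 0 v x hv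
    rw [gaussianPDF, gaussianPDF, ← ENNReal.ofReal_inv_of_pos hp1,
      ← ENNReal.ofReal_mul (by positivity),
      ENNReal.toReal_ofReal (by positivity)]
    rw [inv_mul_eq_div, Real.log_div hpv.ne' hp1.ne']
    rw [gaussianPDFReal, gaussianPDFReal]
    have hs1 : (0:ℝ) < Real.sqrt (2 * π * (1:ℝ≥0)) := Real.sqrt_pos.mpr (by positivity)
    have hsv : (0:ℝ) < Real.sqrt (2 * π * v) := Real.sqrt_pos.mpr (by positivity)
    rw [Real.log_mul (by positivity) (Real.exp_ne_zero _),
      Real.log_mul (by positivity) (Real.exp_ne_zero _),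
      Real.log_exp, Real.log_exp, Real.log_inv, Real.log_inv,
      Real.log_sqrt (by positivity), Real.log_sqrt (by positivity),
      Real.log_mul (by positivity) (by exact_mod_cast hv),
      show ((1:ℝ≥0):ℝ) = 1 by norm_num, mul_one, hvα, hLdef]
    have hα' : α ≠ 0 := hα.ne'
    field_simp
    ring
  have h_int_sq : Integrable (fun x : ℝ => x ^ 2 * gaussianPDFReal 0 v x) :=
    integrable_sq_gaussianPDFReal hv
  have hμeq : μ = volume.withDensity
      (fun x => ((gaussianPDFReal 0 v x).toNNReal : ℝ≥0∞)) := by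
    rw [hμdef, gaussianReal_of_var_ne_zero 0 hv]; rfl
  have h_int_sq_μ : Integrable (fun x : ℝ => x ^ 2) μ := by
    rw [hμeq, integrable_withDensity_iff ((measurable_gaussianPDFReal 0 v).real_toNNReal.coe_nnreal_ennreal)
      (Filter.Eventually.of_forall fun x => ENNReal.coe_lt_top)]
    refine h_int_sq.congr (Filter.Eventually.of_forall fun x => ?_)
    simp only [ENNReal.coe_toReal, Real.coe_toNNReal _ (gaussianPDFReal_nonneg 0 v x)]
  have h_int_L : Integrable L μ := by
    rw [hLdef]
    exact (h_int_sq_μ.const_mul _).sub (integrable_const _)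
  have h_int_llr : Integrable (llr μ γ) μ := h_int_L.congr llr_eq.symm
  have h_integral : ∫ x, llr μ γ x ∂μ = (1 / 2) * (α - 1 - Real.log α) := by
    rw [integral_congr_ae llr_eq, hμeq,
      integral_withDensity_eq_integral_smul (measurable_gaussianPDFReal 0 v).real_toNNReal]
    have : ∀ x : ℝ, (gaussianPDFReal 0 v x).toNNReal • L x
        = (1 / 2 - (2 * α)⁻¹) * (x ^ 2 * gaussianPDFReal 0 v x)
          - (Real.log α / 2) * gaussianPDFReal 0 v x := by
      intro x
      rw [NNReal.smul_def, Real.coe_toNNReal _ (gaussianPDFReal_nonneg 0 v x), hLdef,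
        smul_eq_mul]
      ring
    simp_rw [this]
    rw [integral_sub ((h_int_sq.const_mul _)) ((integrable_gaussianPDFReal 0 v).const_mul _),
      integral_const_mul, integral_const_mul, gaussian_second_moment hv,
      integral_gaussianPDFReal_eq_one 0 hv, hvα]
    have hα' : α ≠ 0 := hα.ne'
    field_simp
  rw [relEntropy, if_pos ⟨h_ac, h_int_llr⟩, h_integral]

/-- `∫_0^1 (α/(1−t+αt) − 1)²/(1−t) dt = α − 1 − log α`, and half of it equals
`D(N(0,α)‖N(0,1))`. -/
theorem integral_optimal_drift (α : ℝ) (hα : 0 < α) :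
    (∫ t in Set.Ioc (0 : ℝ) 1, (α / (1 - t + α * t) - 1) ^ 2 / (1 - t)) =
      α - 1 - Real.log α ∧
    ENNReal.ofReal
        ((1 / 2) * ∫ t in Set.Ioc (0 : ℝ) 1, (α / (1 - t + α * t) - 1) ^ 2 / (1 - t)) =
      relEntropy (gaussianReal 0 α.toNNReal) (gaussianReal 0 1) := by
  refine ⟨aux_part1 α hα, ?_⟩
  rw [aux_part1 α hα, aux_part2 α hα]
end
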